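/- Let 1 < p < r < 2 and consider the Orlicz sequence space ℓ_M generated by M(t) = t^p + t^r, with norm ‖x‖_M = inf { ρ > 0 : Σᵢ ((|xᵢ|/ρ)^p + (|xᵢ|/ρ)^r) ≤ 1 }. If x, y ∈ ℓ_M satisfy ‖x‖_M = ‖y‖_M = 1, then min(‖x+y‖_M, ‖x−y‖_M) < 2^{1/p} or ‖x+y‖_M ≠ ‖x−y‖_M; that is, it is impossible that ‖x+y‖_M = ‖x−y‖_M = 2^{1/p}. -/

import Mathlib

open scoped NNReal

/-- The Orlicz norm of a real sequence for the Orlicz function `M(t) = t^p + t^r`: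
`‖x‖_M = inf { ρ > 0 : Σᵢ ((|xᵢ|/ρ)^p + (|xᵢ|/ρ)^r) ≤ 1 }`. -/
noncomputable def orliczNorm (p r : ℝ) (x : ℕ → ℝ) : ℝ :=
  sInf {ρ : ℝ | 0 < ρ ∧ Summable (fun i => (|x i| / ρ) ^ p + (|x i| / ρ) ^ r) ∧
    (∑' i, ((|x i| / ρ) ^ p + (|x i| / ρ) ^ r)) ≤ 1}


lemma pm2 (s : ℝ) (hs0 : 0 < s) (hs1 : s ≤ 1) (X Y : ℝ≥0) :
    X ^ s + Y ^ s ≤ 2 ^ (1 - s) * (X + Y) ^ s := by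
  have hq : 1 ≤ 1 / s := (one_le_div hs0).2 hs1
  have h := NNReal.rpow_add_le_mul_rpow_add_rpow (X ^ s) (Y ^ s) hq
  have e : ∀ Z : ℝ≥0, (Z ^ s) ^ (1 / s) = Z := by
    intro Z
    rw [← NNReal.rpow_mul, mul_one_div, div_self hs0.ne', NNReal.rpow_one]
  rw [e X, e Y] at h
  have h2 := NNReal.rpow_le_rpow h hs0.le
  rw [← NNReal.rpow_mul, one_div, inv_mul_cancel₀ hs0.ne', NNReal.rpow_one,
    NNReal.mul_rpow, ← NNReal.rpow_mul] at h2
  have he : (s⁻¹ - 1) * s = 1 - s := by field_simp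
  rwa [he] at h2

lemma clarkNN (p : ℝ) (hp1 : 1 ≤ p) (hp2 : p ≤ 2) (u v A B : ℝ≥0)
    (h : u ^ (2:ℝ) + v ^ (2:ℝ) ≤ 2 * (A ^ (2:ℝ) + B ^ (2:ℝ))) :
    u ^ p + v ^ p ≤ 2 * (A ^ p + B ^ p) := by
  set s := p / 2 with hs
  have hs0 : 0 < s := by positivity
  have hs1 : s ≤ 1 := by rw [hs]; linarith
  have e : ∀ Z : ℝ≥0, Z ^ p = (Z ^ (2:ℝ)) ^ s := by
    intro Z
    rw [← NNReal.rpow_mul, hs]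
    ring_nf
  rw [e u, e v, e A, e B]
  calc (u ^ (2:ℝ)) ^ s + (v ^ (2:ℝ)) ^ s
      ≤ 2 ^ (1 - s) * (u ^ (2:ℝ) + v ^ (2:ℝ)) ^ s := pm2 s hs0 hs1 _ _
    _ ≤ 2 ^ (1 - s) * (2 * (A ^ (2:ℝ) + B ^ (2:ℝ))) ^ s := by gcongr
    _ = 2 * (A ^ (2:ℝ) + B ^ (2:ℝ)) ^ s := by
        rw [NNReal.mul_rpow, ← mul_assoc, ← NNReal.rpow_add two_ne_zero, sub_add_cancel,
          NNReal.rpow_one]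
    _ ≤ 2 * ((A ^ (2:ℝ)) ^ s + (B ^ (2:ℝ)) ^ s) := by
        gcongr
        exact NNReal.rpow_add_le_add_rpow _ _ hs0.le hs1

lemma clarkson (p : ℝ) (hp1 : 1 ≤ p) (hp2 : p ≤ 2) (a b : ℝ) :
    |a + b| ^ p + |a - b| ^ p ≤ 2 * (|a| ^ p + |b| ^ p) := by
  have key : ‖a + b‖₊ ^ p + ‖a - b‖₊ ^ p ≤ 2 * (‖a‖₊ ^ p + ‖b‖₊ ^ p) := by
    apply clarkNN p hp1 hp2
    have : ∀ c : ℝ, (‖c‖₊ : ℝ≥0) ^ (2:ℝ) = ‖c‖₊ ^ (2:ℕ) := fun c => NNReal.rpow_natCast _ 2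
    rw [this, this, this, this]
    have : (‖a + b‖₊ ^ (2:ℕ) + ‖a - b‖₊ ^ (2:ℕ) : ℝ≥0) = (2 * (‖a‖₊ ^ (2:ℕ) + ‖b‖₊ ^ (2:ℕ)) : ℝ≥0) := by
      apply NNReal.coe_injective
      push_cast [coe_nnnorm, Real.norm_eq_abs, sq_abs]
      ring
    rw [this]
  have := NNReal.coe_le_coe.2 key
  push_cast [NNReal.coe_rpow, coe_nnnorm, Real.norm_eq_abs] at this
  convert this using 3

noncomputable def oM (p r : ℝ) (z : ℕ → ℝ) (ρ : ℝ) (i : ℕ) : ℝ :=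
  (|z i| / ρ) ^ p + (|z i| / ρ) ^ r

def oSet (p r : ℝ) (z : ℕ → ℝ) : Set ℝ :=
  {ρ : ℝ | 0 < ρ ∧ Summable (oM p r z ρ) ∧ (∑' i, oM p r z ρ i) ≤ 1}

lemma oM_nonneg {p r : ℝ} {z : ℕ → ℝ} {ρ : ℝ} (hρ : 0 < ρ) (i : ℕ) : 0 ≤ oM p r z ρ i := by
  unfold oM; positivity

lemma oSet_bddBelow (p r : ℝ) (z : ℕ → ℝ) : BddBelow (oSet p r z) :=
  ⟨0, fun ρ h => h.1.le⟩

lemma oM_scale_le {p r : ℝ} (hp0 : 0 < p) (hpr : p ≤ r) {a b : ℝ} (ha : 0 < a) (hab : a ≤ b)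
    (z : ℕ → ℝ) (i : ℕ) : oM p r z b i ≤ (a / b) ^ p * oM p r z a i := by
  have hb : 0 < b := ha.trans_le hab
  have h1 : |z i| / b = (|z i| / a) * (a / b) := by field_simp
  have hza : 0 ≤ |z i| / a := by positivity
  have hab' : 0 ≤ a / b := by positivity
  unfold oM
  rw [h1, Real.mul_rpow hza hab', Real.mul_rpow hza hab']
  have hc : (a / b) ^ r ≤ (a / b) ^ p :=
    Real.rpow_le_rpow_of_exponent_ge (by positivity) ((div_le_one hb).2 hab) hpr
  have hzr : 0 ≤ (|z i| / a) ^ r := by positivity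
  nlinarith [mul_le_mul_of_nonneg_left hc hzr]

lemma oM_scale_ge {p r : ℝ} (hp0 : 0 < p) (hpr : p ≤ r) {a b : ℝ} (ha : 0 < a) (hab : a ≤ b)
    (z : ℕ → ℝ) (i : ℕ) : oM p r z a i ≤ (b / a) ^ r * oM p r z b i := by
  have hb : 0 < b := ha.trans_le hab
  have h1 : |z i| / a = (|z i| / b) * (b / a) := by field_simp
  have hzb : 0 ≤ |z i| / b := by positivity
  have hba : 0 ≤ b / a := by positivity
  unfold oM
  rw [h1, Real.mul_rpow hzb hba, Real.mul_rpow hzb hba]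
  have hc : (b / a) ^ p ≤ (b / a) ^ r :=
    Real.rpow_le_rpow_of_exponent_le ((one_le_div ha).2 hab) hpr
  have hzp : 0 ≤ (|z i| / b) ^ p := by positivity
  nlinarith [mul_le_mul_of_nonneg_left hc hzp]

lemma oSet_nonempty {p r : ℝ} (hp0 : 0 < p) (hpr : p ≤ r) {z : ℕ → ℝ} {σ : ℝ} (hρ : 0 < σ)
    (hsum : Summable (oM p r z σ)) : (oSet p r z).Nonempty := by
  set T := ∑' i, oM p r z σ i with hT
  have hT0 : 0 ≤ T := tsum_nonneg fun i => oM_nonneg hρ i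
  set c := max 1 (T ^ (1 / p)) with hc
  have hc1 : 1 ≤ c := le_max_left _ _
  have hc0 : 0 < c := lt_of_lt_of_le one_pos hc1
  have hTc : T ≤ c ^ p := by
    calc T = (T ^ (1 / p)) ^ p := by
          rw [← Real.rpow_mul hT0, one_div, inv_mul_cancel₀ hp0.ne', Real.rpow_one]
      _ ≤ c ^ p := Real.rpow_le_rpow (Real.rpow_nonneg hT0 _) (le_max_right _ _) hp0.le
  have hb : 0 < c * σ := by positivity
  have hle : σ ≤ c * σ := le_mul_of_one_le_left hρ.le hc1
  have hptw : ∀ i, oM p r z (c * σ) i ≤ (σ / (c * σ)) ^ p * oM p r z σ i :=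
    fun i => oM_scale_le hp0 hpr hρ hle z i
  have hsum2 : Summable fun i => (σ / (c * σ)) ^ p * oM p r z σ i := hsum.mul_left _
  have hsum3 : Summable (oM p r z (c * σ)) :=
    Summable.of_nonneg_of_le (fun i => oM_nonneg hb i) hptw hsum2
  refine ⟨c * σ, hb, hsum3, ?_⟩
  calc (∑' i, oM p r z (c * σ) i)
      ≤ ∑' i, (σ / (c * σ)) ^ p * oM p r z σ i := Summable.tsum_le_tsum hptw hsum3 hsum2
    _ = (σ / (c * σ)) ^ p * T := tsum_mul_left
    _ ≤ 1 := by
        have he : σ / (c * σ) = 1 / c := by rw [mul_comm]; field_simp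
        rw [he, Real.div_rpow zero_le_one hc0.le, Real.one_rpow,
          div_mul_eq_mul_div, div_le_one (by positivity), one_mul]
        exact hTc

lemma modular_le_of_norm_one {p r : ℝ} (hp0 : 0 < p) (hpr : p ≤ r) (hr0 : 0 < r) {z : ℕ → ℝ}
    (hne : (oSet p r z).Nonempty) (hnorm : sInf (oSet p r z) = 1) :
    Summable (oM p r z 1) ∧ (∑' i, oM p r z 1 i) ≤ 1 := by
  have key : ∀ n : ℕ, (∑ i ∈ Finset.range n, oM p r z 1 i) ≤ 1 := by
    intro n
    set F := ∑ i ∈ Finset.range n, oM p r z 1 i with hF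
    have hF0 : 0 ≤ F := Finset.sum_nonneg fun i _ => oM_nonneg one_pos i
    have hlb : ∀ ρ ∈ oSet p r z, F ^ (1 / r) ≤ ρ := by
      intro ρ hρ
      obtain ⟨hρ0, hρs, hρt⟩ := hρ
      have hρ1 : 1 ≤ ρ := by
        have := csInf_le (oSet_bddBelow p r z) ⟨hρ0, hρs, hρt⟩
        rwa [hnorm] at this
      have h1 : F ≤ ρ ^ r := by
        calc F ≤ ∑ i ∈ Finset.range n, (ρ / 1) ^ r * oM p r z ρ i :=
              Finset.sum_le_sum fun i _ => oM_scale_ge hp0 hpr one_pos hρ1 z i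
          _ = ρ ^ r * ∑ i ∈ Finset.range n, oM p r z ρ i := by
              rw [← Finset.mul_sum, div_one]
          _ ≤ ρ ^ r * ∑' i, oM p r z ρ i := by
              have := Summable.sum_le_tsum (Finset.range n) (fun i _ => oM_nonneg hρ0 i) hρs
              have hρr : (0:ℝ) ≤ ρ ^ r := Real.rpow_nonneg hρ0.le _
              nlinarith
          _ ≤ ρ ^ r * 1 := by
              have hρr : (0:ℝ) ≤ ρ ^ r := Real.rpow_nonneg hρ0.le _
              nlinarith
          _ = ρ ^ r := mul_one _
      calc F ^ (1 / r) ≤ (ρ ^ r) ^ (1 / r) := Real.rpow_le_rpow hF0 h1 (by positivity)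
        _ = ρ := by
            rw [← Real.rpow_mul hρ0.le, mul_one_div, div_self hr0.ne', Real.rpow_one]
    have h2 : F ^ (1 / r) ≤ 1 := by
      have := le_csInf hne hlb
      rwa [hnorm] at this
    have h3 : (F ^ (1 / r)) ^ r ≤ 1 := by
      calc (F ^ (1 / r)) ^ r ≤ 1 ^ r :=
            Real.rpow_le_rpow (Real.rpow_nonneg hF0 _) h2 hr0.le
        _ = 1 := Real.one_rpow r
    rwa [← Real.rpow_mul hF0, one_div, inv_mul_cancel₀ hr0.ne', Real.rpow_one] at h3
  have hsum : Summable (oM p r z 1) :=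
    summable_of_sum_range_le (fun i => oM_nonneg one_pos i) key
  exact ⟨hsum, hsum.tsum_le_of_sum_range_le key⟩

lemma modular_ge_at_norm {p r : ℝ} (hp0 : 0 < p) (hpr : p ≤ r) (hr0 : 0 < r) {z : ℕ → ℝ}
    {b : ℝ} (hb : 0 < b) (hnorm : sInf (oSet p r z) = b) (hsum : Summable (oM p r z b)) :
    1 ≤ ∑' i, oM p r z b i := by
  by_contra hcon
  push_neg at hcon
  set T := ∑' i, oM p r z b i with hT
  have hT0 : 0 ≤ T := tsum_nonneg fun i => oM_nonneg hb i
  set m := max T (1/2) with hm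
  have hm0 : 0 < m := lt_of_lt_of_le one_half_pos (le_max_right _ _)
  have hm1 : m < 1 := max_lt hcon one_half_lt_one
  set t := m ^ (1 / r) with ht
  have ht0 : 0 < t := Real.rpow_pos_of_pos hm0 _
  have ht1 : t < 1 := Real.rpow_lt_one hm0.le hm1 (by positivity)
  have htr : t ^ r = m := by
    rw [ht, ← Real.rpow_mul hm0.le, one_div, inv_mul_cancel₀ hr0.ne', Real.rpow_one]
  have ha : 0 < t * b := by positivity
  have hab : t * b ≤ b := by nlinarith
  have hba : b / (t * b) = 1 / t := by rw [mul_comm]; field_simp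
  have hptw : ∀ i, oM p r z (t * b) i ≤ (1 / t) ^ r * oM p r z b i := by
    intro i
    have := oM_scale_ge hp0 hpr ha hab z i
    rwa [hba] at this
  have hsum2 : Summable fun i => (1 / t) ^ r * oM p r z b i := hsum.mul_left _
  have hsum3 : Summable (oM p r z (t * b)) :=
    Summable.of_nonneg_of_le (fun i => oM_nonneg ha i) hptw hsum2
  have hmem : t * b ∈ oSet p r z := by
    refine ⟨ha, hsum3, ?_⟩
    calc (∑' i, oM p r z (t * b) i) ≤ ∑' i, (1 / t) ^ r * oM p r z b i :=
          Summable.tsum_le_tsum hptw hsum3 hsum2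
      _ = (1 / t) ^ r * T := tsum_mul_left
      _ ≤ 1 := by
          rw [Real.div_rpow zero_le_one ht0.le, Real.one_rpow, htr,
            div_mul_eq_mul_div, div_le_one hm0, one_mul]
          exact le_max_left _ _
  have := csInf_le (oSet_bddBelow p r z) hmem
  rw [hnorm] at this
  nlinarith

/-- Let `1 < p < r < 2` and let `ℓ_M` be the Orlicz sequence space generated by
`M(t) = t^p + t^r`. If `x, y ∈ ℓ_M` with `‖x‖_M = ‖y‖_M = 1`, then it is impossible that
`‖x+y‖_M = ‖x-y‖_M = 2^{1/p}`. -/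
theorem orlicz_sum_diff_not_both_norm (p r : ℝ) (hp : 1 < p) (hpr : p < r) (hr : r < 2)
    (x y : ℕ → ℝ)
    (hxM : ∃ ρ : ℝ, 0 < ρ ∧ Summable (fun i => (|x i| / ρ) ^ p + (|x i| / ρ) ^ r))
    (hyM : ∃ ρ : ℝ, 0 < ρ ∧ Summable (fun i => (|y i| / ρ) ^ p + (|y i| / ρ) ^ r))
    (hx1 : orliczNorm p r x = 1) (hy1 : orliczNorm p r y = 1) :
    ¬ (orliczNorm p r (x + y) = (2 : ℝ) ^ (1 / p) ∧
       orliczNorm p r (x - y) = (2 : ℝ) ^ (1 / p)) := by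
  rintro ⟨hplus, hminus⟩
  have hp0 : 0 < p := by linarith
  have hr0 : 0 < r := by linarith
  have hp1 : 1 ≤ p := hp.le
  have hp2 : p ≤ 2 := by linarith
  have hr1 : 1 ≤ r := by linarith
  have hr2 : r ≤ 2 := hr.le
  have hpr' : p ≤ r := hpr.le
  -- translate to oSet language
  have hx1' : sInf (oSet p r x) = 1 := hx1
  have hy1' : sInf (oSet p r y) = 1 := hy1
  set ρ₀ : ℝ := (2 : ℝ) ^ (1 / p) with hρ₀def
  have hplus' : sInf (oSet p r (x + y)) = ρ₀ := hplus
  have hminus' : sInf (oSet p r (x - y)) = ρ₀ := hminus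
  -- ρ₀ facts
  have hρ₀0 : 0 < ρ₀ := Real.rpow_pos_of_pos two_pos _
  have hρ₀1 : 1 ≤ ρ₀ := Real.one_le_rpow one_le_two (by positivity)
  have hρ₀p : ρ₀ ^ p = 2 := by
    rw [hρ₀def, ← Real.rpow_mul (by norm_num), one_div, inv_mul_cancel₀ hp0.ne', Real.rpow_one]
  have h2r : 2 < ρ₀ ^ r := by
    rw [hρ₀def, ← Real.rpow_mul (by norm_num), one_div, inv_mul_eq_div]
    nth_rewrite 1 [show (2:ℝ) = 2 ^ (1:ℝ) by rw [Real.rpow_one]]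
    exact Real.rpow_lt_rpow_of_exponent_lt one_lt_two ((one_lt_div hp0).2 hpr)
  have hρ₀r0 : (0:ℝ) < ρ₀ ^ r := Real.rpow_pos_of_pos hρ₀0 _
  -- modular ≤ 1 at norm 1 for x and y
  obtain ⟨ρx, hρx, hsx⟩ := hxM
  obtain ⟨ρy, hρy, hsy⟩ := hyM
  have hnex : (oSet p r x).Nonempty := oSet_nonempty hp0 hpr' hρx hsx
  have hney : (oSet p r y).Nonempty := oSet_nonempty hp0 hpr' hρy hsy
  obtain ⟨hsx1, htx1⟩ := modular_le_of_norm_one hp0 hpr' hr0 hnex hx1'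
  obtain ⟨hsy1, hty1⟩ := modular_le_of_norm_one hp0 hpr' hr0 hney hy1'
  have hoMx1 : oM p r x 1 = fun i => |x i| ^ p + |x i| ^ r := by
    funext i; unfold oM; rw [div_one]
  have hoMy1 : oM p r y 1 = fun i => |y i| ^ p + |y i| ^ r := by
    funext i; unfold oM; rw [div_one]
  have hsx1' : Summable (fun i => |x i| ^ p + |x i| ^ r) := hoMx1 ▸ hsx1
  have hsy1' : Summable (fun i => |y i| ^ p + |y i| ^ r) := hoMy1 ▸ hsy1
  -- summability of the four pieces for x, y
  have hxp : Summable (fun i => |x i| ^ p) := by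
    refine Summable.of_nonneg_of_le (fun i => by positivity) (fun i => ?_) hsx1'
    exact le_add_of_nonneg_right (by positivity)
  have hxr : Summable (fun i => |x i| ^ r) := by
    refine Summable.of_nonneg_of_le (fun i => by positivity) (fun i => ?_) hsx1'
    exact le_add_of_nonneg_left (by positivity)
  have hyp : Summable (fun i => |y i| ^ p) := by
    refine Summable.of_nonneg_of_le (fun i => by positivity) (fun i => ?_) hsy1'
    exact le_add_of_nonneg_right (by positivity)
  have hyr : Summable (fun i => |y i| ^ r) := by
    refine Summable.of_nonneg_of_le (fun i => by positivity) (fun i => ?_) hsy1'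
    exact le_add_of_nonneg_left (by positivity)
  -- pointwise bounds used for summability of sum/difference pieces
  have habs : ∀ (q : ℝ), 1 ≤ q → q ≤ 2 → ∀ i, (|x i + y i| / ρ₀) ^ q ≤ 2 * (|x i| ^ q + |y i| ^ q)
      ∧ (|x i - y i| / ρ₀) ^ q ≤ 2 * (|x i| ^ q + |y i| ^ q) := by
    intro q hq1 hq2 i
    have hq0 : (0:ℝ) < q := by linarith
    have hck := clarkson q hq1 hq2 (x i) (y i)
    have h1 : (|x i + y i| / ρ₀) ^ q ≤ |x i + y i| ^ q := by
      apply Real.rpow_le_rpow (by positivity) _ hq0.le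
      exact div_le_self (abs_nonneg _) hρ₀1
    have h2 : (|x i - y i| / ρ₀) ^ q ≤ |x i - y i| ^ q := by
      apply Real.rpow_le_rpow (by positivity) _ hq0.le
      exact div_le_self (abs_nonneg _) hρ₀1
    have hpos1 : (0:ℝ) ≤ |x i + y i| ^ q := by positivity
    have hpos2 : (0:ℝ) ≤ |x i - y i| ^ q := by positivity
    constructor <;> nlinarith
  have hsPp : Summable (fun i => (|x i + y i| / ρ₀) ^ p) := by
    refine Summable.of_nonneg_of_le (fun i => by positivity)
      (fun i => (habs p hp1 hp2 i).1) ?_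
    exact (hxp.add hyp).mul_left 2
  have hsPr : Summable (fun i => (|x i + y i| / ρ₀) ^ r) := by
    refine Summable.of_nonneg_of_le (fun i => by positivity)
      (fun i => (habs r hr1 hr2 i).1) ?_
    exact (hxr.add hyr).mul_left 2
  have hsMp : Summable (fun i => (|x i - y i| / ρ₀) ^ p) := by
    refine Summable.of_nonneg_of_le (fun i => by positivity)
      (fun i => (habs p hp1 hp2 i).2) ?_
    exact (hxp.add hyp).mul_left 2
  have hsMr : Summable (fun i => (|x i - y i| / ρ₀) ^ r) := by
    refine Summable.of_nonneg_of_le (fun i => by positivity)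
      (fun i => (habs r hr1 hr2 i).2) ?_
    exact (hxr.add hyr).mul_left 2
  -- modular summability of x ± y at ρ₀
  have hmodP : Summable (oM p r (x + y) ρ₀) := by
    have := hsPp.add hsPr
    exact this
  have hmodM : Summable (oM p r (x - y) ρ₀) := by
    have := hsMp.add hsMr
    exact this
  -- modular lower bounds at the norm
  have hgeP : 1 ≤ ∑' i, oM p r (x + y) ρ₀ i :=
    modular_ge_at_norm hp0 hpr' hr0 hρ₀0 hplus' hmodP
  have hgeM : 1 ≤ ∑' i, oM p r (x - y) ρ₀ i :=
    modular_ge_at_norm hp0 hpr' hr0 hρ₀0 hminus' hmodM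
  -- split the modulars into tsums
  have hsplitP : (∑' i, oM p r (x + y) ρ₀ i)
      = (∑' i, (|x i + y i| / ρ₀) ^ p) + ∑' i, (|x i + y i| / ρ₀) ^ r := by
    rw [← Summable.tsum_add hsPp hsPr]
    exact tsum_congr fun i => by simp [oM]
  have hsplitM : (∑' i, oM p r (x - y) ρ₀ i)
      = (∑' i, (|x i - y i| / ρ₀) ^ p) + ∑' i, (|x i - y i| / ρ₀) ^ r := by
    rw [← Summable.tsum_add hsMp hsMr]
    exact tsum_congr fun i => by simp [oM]
  have htx1' : (∑' i, |x i| ^ p) + (∑' i, |x i| ^ r) ≤ 1 := by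
    rw [← Summable.tsum_add hxp hxr]
    calc (∑' i, (|x i| ^ p + |x i| ^ r)) = ∑' i, oM p r x 1 i :=
          tsum_congr fun i => by simp [oM]
      _ ≤ 1 := htx1
  have hty1' : (∑' i, |y i| ^ p) + (∑' i, |y i| ^ r) ≤ 1 := by
    rw [← Summable.tsum_add hyp hyr]
    calc (∑' i, (|y i| ^ p + |y i| ^ r)) = ∑' i, oM p r y 1 i :=
          tsum_congr fun i => by simp [oM]
      _ ≤ 1 := hty1
  -- key pointwise Clarkson estimates
  have hEp : ∀ i, (|x i + y i| / ρ₀) ^ p + (|x i - y i| / ρ₀) ^ p ≤ |x i| ^ p + |y i| ^ p := by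
    intro i
    have hck := clarkson p hp1 hp2 (x i) (y i)
    rw [Real.div_rpow (abs_nonneg _) hρ₀0.le, Real.div_rpow (abs_nonneg _) hρ₀0.le, hρ₀p]
    linarith
  have hEr : ∀ i, (|x i + y i| / ρ₀) ^ r + (|x i - y i| / ρ₀) ^ r
      ≤ (2 / ρ₀ ^ r) * (|x i| ^ r + |y i| ^ r) := by
    intro i
    have hck := clarkson r hr1 hr2 (x i) (y i)
    rw [Real.div_rpow (abs_nonneg _) hρ₀0.le, Real.div_rpow (abs_nonneg _) hρ₀0.le,
      ← add_div, div_mul_eq_mul_div, div_le_div_iff₀ hρ₀r0 hρ₀r0]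
    exact mul_le_mul_of_nonneg_right hck hρ₀r0.le
  -- sum the estimates
  have hSp : (∑' i, (|x i + y i| / ρ₀) ^ p) + (∑' i, (|x i - y i| / ρ₀) ^ p)
      ≤ (∑' i, |x i| ^ p) + (∑' i, |y i| ^ p) := by
    rw [← Summable.tsum_add hsPp hsMp, ← Summable.tsum_add hxp hyp]
    exact Summable.tsum_le_tsum hEp (hsPp.add hsMp) (hxp.add hyp)
  have hSr : (∑' i, (|x i + y i| / ρ₀) ^ r) + (∑' i, (|x i - y i| / ρ₀) ^ r)
      ≤ (2 / ρ₀ ^ r) * ((∑' i, |x i| ^ r) + (∑' i, |y i| ^ r)) := by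
    rw [← Summable.tsum_add hsPr hsMr, ← Summable.tsum_add hxr hyr, ← tsum_mul_left]
    exact Summable.tsum_le_tsum hEr (hsPr.add hsMr) (((hxr.add hyr)).mul_left _)
  -- conclude Arx + Ary = 0
  have hθ : 2 / ρ₀ ^ r < 1 := (div_lt_one hρ₀r0).2 h2r
  have hθ0 : 0 < 2 / ρ₀ ^ r := by positivity
  have hArx0 : 0 ≤ ∑' i, |x i| ^ r := tsum_nonneg fun i => by positivity
  have hAry0 : 0 ≤ ∑' i, |y i| ^ r := tsum_nonneg fun i => by positivity
  rw [hsplitP] at hgeP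
  rw [hsplitM] at hgeM
  set S := (∑' i, |x i| ^ r) + (∑' i, |y i| ^ r) with hS
  have h1 : S ≤ (2 / ρ₀ ^ r) * S := by linarith
  have hS0 : S ≤ 0 := by
    by_contra hcon2
    push_neg at hcon2
    have hlt := mul_lt_mul_of_pos_right hθ hcon2
    rw [one_mul] at hlt
    linarith
  have hzero : (∑' i, |x i| ^ r) = 0 := by linarith
  -- hence x = 0
  have hx0 : ∀ i, |x i| = 0 := by
    intro i
    by_contra hne
    have hpos : 0 < |x i| := lt_of_le_of_ne (abs_nonneg _) (Ne.symm hne)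
    have h1 : 0 < |x i| ^ r := Real.rpow_pos_of_pos hpos _
    have h2 : |x i| ^ r ≤ ∑' j, |x j| ^ r :=
      Summable.le_tsum hxr i fun j _ => by positivity
    linarith [hzero ▸ h2]
  -- contradiction with ‖x‖ = 1
  have hmem : (1/2 : ℝ) ∈ oSet p r x := by
    have hzero' : oM p r x (1/2) = fun _ => 0 := by
      funext i
      unfold oM
      rw [hx0 i, zero_div, Real.zero_rpow hp0.ne', Real.zero_rpow hr0.ne', add_zero]
    refine ⟨by norm_num, ?_, ?_⟩
    · rw [hzero']; exact summable_zero
    · rw [hzero']; simp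
  have := csInf_le (oSet_bddBelow p r x) hmem
  rw [hx1'] at this
  linarith
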